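/- (Tie-robust rank lower bound.) Let G = {g₁, …, g_K} be a finite group of cardinality K acting measurably on a measurable space 𝕀, let m : 𝕀 → ℝ be measurable, and let X be a random element of 𝕀 such that for every g ∈ G the law of g • X equals the law of X. Define, for each j ∈ {1,…,K}, the rank R_j := 1 + #{u ∈ {1,…,K} : m(g_j • X) ≥ m(g_u • X)}. Then for every j ∈ {1,…,K} and every k ∈ {1,…,K}, ℙ(R_j ≥ k) ≥ (K − k + 1)/K. -/

import Mathlib

open MeasureTheory ProbabilityTheory ENNReal

lemma rank_count_ge' {K : ℕ} (k : ℕ) (hk1 : 1 ≤ k) (hkK : k ≤ K) (v : Fin K → ℝ) :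
    K + 1 - k ≤ (Finset.univ.filter
      (fun j : Fin K => k ≤ 1 + (Finset.univ.filter (fun u => v u ≤ v j)).card)).card := by
  classical
  set c : Fin K → ℕ := fun j => (Finset.univ.filter (fun u => v u ≤ v j)).card with hc
  set S := Finset.univ.filter (fun j : Fin K => ¬ (k ≤ 1 + c j)) with hSdef
  have hS : S.card ≤ k - 1 := by
    by_cases h : S.Nonempty
    · obtain ⟨j, hjS, hj⟩ := S.exists_max_image v h
      have hsub : S ⊆ Finset.univ.filter (fun u => v u ≤ v j) :=
        fun u hu => Finset.mem_filter.mpr ⟨Finset.mem_univ u, hj u hu⟩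
      have h1 : S.card ≤ c j := Finset.card_le_card hsub
      have h2 : ¬ (k ≤ 1 + c j) := (Finset.mem_filter.mp hjS).2
      omega
    · simp [Finset.not_nonempty_iff_eq_empty.mp h]
  have key := Finset.card_filter_add_card_filter_not
    (s := (Finset.univ : Finset (Fin K))) (p := fun j : Fin K => k ≤ 1 + c j)
  rw [Finset.card_univ, Fintype.card_fin, ← hSdef] at key
  have : (Finset.univ.filter
      (fun j : Fin K => k ≤ 1 + (Finset.univ.filter (fun u => v u ≤ v j)).card)) =
      (Finset.univ.filter (fun j : Fin K => k ≤ 1 + c j)) := rfl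
  rw [this]
  omega

theorem tie_robust_rank_lower_bound
    {𝕀 G Ω : Type*} [MeasurableSpace 𝕀] [MeasurableSpace Ω]
    [Group G] [Fintype G] [MulAction G 𝕀]
    (hact : ∀ g : G, Measurable (fun x : 𝕀 => g • x))
    (Pr : Measure Ω) [IsProbabilityMeasure Pr]
    (K : ℕ) (hK : 0 < K) (e : Fin K ≃ G)
    (m : 𝕀 → ℝ) (hm : Measurable m)
    (X : Ω → 𝕀) (hX : Measurable X)
    (hinv : ∀ g : G, Pr.map (fun ω => g • X ω) = Pr.map X)
    (R : Fin K → Ω → ℕ)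
    (hR : ∀ (j : Fin K) (ω : Ω), R j ω =
      1 + ({u : Fin K | m (e u • X ω) ≤ m (e j • X ω)} : Set (Fin K)).ncard) :
    ∀ (j : Fin K) (k : ℕ), 1 ≤ k → k ≤ K →
      ENNReal.ofReal (((K : ℝ) - k + 1) / K) ≤ Pr {ω : Ω | k ≤ R j ω} := by
  classical
  intro j k hk1 hkK
  set f : Fin K → 𝕀 → ℕ := fun i x =>
    1 + (Finset.univ.filter (fun u : Fin K => m (e u • x) ≤ m (e i • x))).card with hf
  have hRf : ∀ (i : Fin K) (ω : Ω), R i ω = f i (X ω) := by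
    intro i ω
    rw [hR, hf]
    congr 1
    rw [Set.ncard_eq_toFinset_card']
    simp
  have hmeas : ∀ i : Fin K, Measurable (f i) := by
    intro i
    have hfe : f i = fun x => 1 + ∑ u : Fin K, if m (e u • x) ≤ m (e i • x) then 1 else 0 := by
      funext x; rw [hf]; simp only [Finset.card_filter]
    rw [hfe]
    exact measurable_const.add (Finset.measurable_sum _ (fun u _ =>
      Measurable.ite (measurableSet_le (hm.comp (hact (e u))) (hm.comp (hact (e i))))
        measurable_const measurable_const))
  have hAm : ∀ i : Fin K, MeasurableSet {x : 𝕀 | k ≤ f i x} :=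
    fun i => (hmeas i) measurableSet_Ici
  have hA : ∀ i : Fin K, MeasurableSet {ω : Ω | k ≤ f i (X ω)} :=
    fun i => ((hmeas i).comp hX) measurableSet_Ici
  -- equality of probabilities
  have hpeq : ∀ i : Fin K, Pr {ω | k ≤ f i (X ω)} = Pr {ω | k ≤ f j (X ω)} := by
    intro i
    set g : G := (e i)⁻¹ * e j with hg
    have hfg : ∀ x : 𝕀, f i (g • x) = f j x := by
      intro x
      simp only [hf]
      congr 1
      have hij : e i • g • x = e j • x := by
        rw [smul_smul, hg, mul_inv_cancel_left]
      have hu : ∀ u : Fin K, e u • g • x = (e u * g) • x := fun u => smul_smul _ _ _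
      refine Finset.card_bij' (fun u _ => e.symm (e u * g)) (fun u _ => e.symm (e u * g⁻¹))
        ?_ ?_ ?_ ?_
      · intro u hu'
        simp only [Finset.mem_filter, Finset.mem_univ, true_and] at hu' ⊢
        rw [Equiv.apply_symm_apply]
        rw [hu u, hij] at hu'
        exact hu'
      · intro u hu'
        simp only [Finset.mem_filter, Finset.mem_univ, true_and] at hu' ⊢
        rw [Equiv.apply_symm_apply, smul_smul, inv_mul_cancel_right, hg,
          smul_smul, mul_inv_cancel_left]
        exact hu'
      · intro u _; simp [mul_assoc]
      · intro u _; simp [mul_assoc]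
    have hset : {ω : Ω | k ≤ f j (X ω)} = (fun ω => g • X ω) ⁻¹' {x | k ≤ f i x} := by
      ext ω; simp [Set.mem_preimage, hfg (X ω)]
    calc Pr {ω | k ≤ f i (X ω)} = Pr (X ⁻¹' {x | k ≤ f i x}) := rfl
      _ = (Pr.map X) {x | k ≤ f i x} := (Measure.map_apply hX (hAm i)).symm
      _ = (Pr.map (fun ω => g • X ω)) {x | k ≤ f i x} := by rw [hinv g]
      _ = Pr ((fun ω => g • X ω) ⁻¹' {x | k ≤ f i x}) :=
            Measure.map_apply ((hact g).comp hX) (hAm i)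
      _ = Pr {ω | k ≤ f j (X ω)} := by rw [hset]
  -- sum lower bound
  have hsum : ((K + 1 - k : ℕ) : ℝ≥0∞) ≤ ∑ i : Fin K, Pr {ω | k ≤ f i (X ω)} := by
    have hrep : ∀ i : Fin K, Pr {ω | k ≤ f i (X ω)} =
        ∫⁻ ω, Set.indicator {ω : Ω | k ≤ f i (X ω)} 1 ω ∂Pr := by
      intro i; rw [lintegral_indicator_one (hA i)]
    calc ((K + 1 - k : ℕ) : ℝ≥0∞) = ∫⁻ _, ((K + 1 - k : ℕ) : ℝ≥0∞) ∂Pr := by simp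
      _ ≤ ∫⁻ ω, ∑ i : Fin K, Set.indicator {ω : Ω | k ≤ f i (X ω)} 1 ω ∂Pr := by
          refine lintegral_mono fun ω => ?_
          have hcnt := rank_count_ge' k hk1 hkK (fun u => m (e u • X ω))
          have hsum2 : ∑ i : Fin K, Set.indicator {ω : Ω | k ≤ f i (X ω)} 1 ω =
              ((Finset.univ.filter (fun i : Fin K => k ≤ f i (X ω))).card : ℝ≥0∞) := by
            rw [← Finset.sum_boole]
            refine Finset.sum_congr rfl fun i _ => ?_
            simp [Set.indicator_apply]
          rw [hsum2]
          exact Nat.cast_le.mpr hcnt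
      _ = ∑ i : Fin K, ∫⁻ ω, Set.indicator {ω : Ω | k ≤ f i (X ω)} 1 ω ∂Pr := by
          rw [lintegral_finset_sum]
          exact fun i _ => (measurable_one.indicator (hA i))
      _ = ∑ i : Fin K, Pr {ω | k ≤ f i (X ω)} := by
          exact Finset.sum_congr rfl fun i _ => (hrep i).symm
  have hfinsum : ∑ i : Fin K, Pr {ω | k ≤ f i (X ω)} = K * Pr {ω | k ≤ f j (X ω)} := by
    simp [hpeq, Finset.sum_const, Finset.card_univ]
  have hgoalset : {ω : Ω | k ≤ R j ω} = {ω : Ω | k ≤ f j (X ω)} := by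
    ext ω; simp [hRf j ω]
  rw [hgoalset]
  have hcast : ENNReal.ofReal (((K : ℝ) - k + 1) / K) = ((K + 1 - k : ℕ) : ℝ≥0∞) / K := by
    rw [ENNReal.ofReal_div_of_pos (by exact_mod_cast hK)]
    have h1 : ((K : ℝ) - k + 1) = ((K + 1 - k : ℕ) : ℝ) := by
      rw [Nat.cast_sub (by omega)]; push_cast; ring
    rw [h1, ENNReal.ofReal_natCast, ENNReal.ofReal_natCast]
  rw [hcast]
  refine ENNReal.div_le_of_le_mul ?_
  rw [mul_comm]
  rw [hfinsum] at hsum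
  exact hsum
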